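/- For each fixed z ∈ ℝ, lim_{d→∞} [cos^d(z/√d) − (d−1) cos^{d−2}(z/√d) sin²(z/√d)] = (1 − z²) exp(−z²/2). -/

import Mathlib

open Real Filter

-- step lemmas
lemma lim_sin_div : Tendsto (fun t : ℝ => Real.sin t / t) (nhdsWithin 0 {0}ᶜ) (nhds 1) := by
  have h := (Real.hasDerivAt_sin 0)
  rw [hasDerivAt_iff_tendsto_slope] at h
  rw [Real.cos_zero] at h
  refine h.congr fun t => ?_
  simp [slope_def_field]

lemma lim_one_sub_cos : Tendsto (fun t : ℝ => (1 - Real.cos t) / t ^ 2) (nhdsWithin 0 {0}ᶜ) (nhds (1/2)) := by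
  have hhalf : Tendsto (fun t : ℝ => t / 2) (nhdsWithin 0 {0}ᶜ) (nhdsWithin 0 {0}ᶜ) := by
    rw [tendsto_nhdsWithin_iff]
    constructor
    · have : Tendsto (fun t : ℝ => t / 2) (nhds 0) (nhds (0/2)) := (tendsto_id.div_const 2)
      simpa using this.mono_left nhdsWithin_le_nhds
    · filter_upwards [self_mem_nhdsWithin] with t ht
      simpa using ht
  have h := (lim_sin_div.comp hhalf)
  have h2 : Tendsto (fun t : ℝ => (Real.sin (t/2) / (t/2)) ^ 2 / 2) (nhdsWithin 0 {0}ᶜ) (nhds (1/2)) := by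
    have := (h.pow 2).div_const 2
    simpa using this
  refine h2.congr' ?_
  filter_upwards [self_mem_nhdsWithin] with t ht
  have ht0 : t ≠ 0 := ht
  have hc : 1 - Real.cos t = 2 * Real.sin (t/2) ^ 2 := by
    have h1 := Real.cos_two_mul (t/2)
    have h2 := Real.sin_sq_add_cos_sq (t/2)
    have : Real.cos t = 2 * Real.cos (t/2) ^ 2 - 1 := by
      rw [← h1]; ring_nf
    nlinarith
  field_simp [hc]
  ring_nf; rw [hc]; ring_nf

lemma lim_log_one_sub : Tendsto (fun u : ℝ => Real.log (1 - u) / u) (nhdsWithin 0 {0}ᶜ) (nhds (-1)) := by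
  have hinner : HasDerivAt (fun u : ℝ => 1 - u) (-1) 0 := by
    simpa using (hasDerivAt_id (0:ℝ)).const_sub 1
  have h : HasDerivAt (fun u : ℝ => Real.log (1 - u)) (-1) 0 := by
    have := (Real.hasDerivAt_log (by norm_num : (1:ℝ) - 0 ≠ 0)).comp 0 hinner
    simpa [Function.comp_def] using this
  rw [hasDerivAt_iff_tendsto_slope] at h
  refine h.congr fun u => ?_
  simp [slope_def_field]

lemma lim_log_cos : Tendsto (fun t : ℝ => Real.log (Real.cos t) / t ^ 2) (nhdsWithin 0 {0}ᶜ) (nhds (-(1/2))) := by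
  have hu : Tendsto (fun t : ℝ => 1 - Real.cos t) (nhdsWithin 0 {0}ᶜ) (nhdsWithin 0 {0}ᶜ) := by
    rw [tendsto_nhdsWithin_iff]
    constructor
    · have : Tendsto (fun t : ℝ => 1 - Real.cos t) (nhds 0) (nhds (1 - Real.cos 0)) :=
        (tendsto_const_nhds.sub (Real.continuous_cos.tendsto 0))
      simpa using this.mono_left nhdsWithin_le_nhds
    · have hmem : Set.Ioo (-(π/2)) (π/2) ∈ nhdsWithin (0:ℝ) {0}ᶜ := by
        apply nhdsWithin_le_nhds
        apply Ioo_mem_nhds <;> [linarith [Real.pi_pos]; linarith [Real.pi_pos]]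
      filter_upwards [hmem, self_mem_nhdsWithin] with t ht ht0
      simp only [Set.mem_compl_iff, Set.mem_singleton_iff]
      intro h
      have hc1 : Real.cos t = 1 := by linarith
      have hpi := Real.pi_pos
      have := (Real.cos_eq_one_iff_of_lt_of_lt (x := t)
        (by cases ht; linarith) (by cases ht; linarith)).mp hc1
      exact ht0 this
  have hmul : Tendsto (fun t : ℝ => (Real.log (1 - (1 - Real.cos t)) / (1 - Real.cos t)) * ((1 - Real.cos t) / t ^ 2)) (nhdsWithin 0 {0}ᶜ) (nhds (-1 * (1/2))) :=
    (lim_log_one_sub.comp hu).mul lim_one_sub_cos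
  have : (-1 : ℝ) * (1/2) = -(1/2) := by norm_num
  rw [this] at hmul
  refine hmul.congr' ?_
  filter_upwards [hu.eventually self_mem_nhdsWithin, self_mem_nhdsWithin] with t htc ht0
  have hc : (1:ℝ) - Real.cos t ≠ 0 := htc
  have ht0' : (t:ℝ) ≠ 0 := ht0
  have h1 : (1:ℝ) - (1 - Real.cos t) = Real.cos t := by ring
  rw [h1]
  field_simp

lemma lim_arg (z : ℝ) : Tendsto (fun d : ℕ => z / Real.sqrt d) atTop (nhds 0) := by
  have hm : Tendsto Real.sqrt atTop atTop := by
    apply tendsto_atTop_atTop_of_monotone (fun a b hab => Real.sqrt_le_sqrt hab)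
    intro b
    exact ⟨b ^ 2, by rw [Real.sqrt_sq_eq_abs]; exact le_abs_self b⟩
  have h : Tendsto (fun d : ℕ => Real.sqrt d) atTop atTop :=
    hm.comp tendsto_natCast_atTop_atTop
  simpa using Tendsto.div_atTop (tendsto_const_nhds (x := z)) h

lemma lim_arg' {z : ℝ} (hz : z ≠ 0) :
    Tendsto (fun d : ℕ => z / Real.sqrt d) atTop (nhdsWithin 0 {0}ᶜ) := by
  rw [tendsto_nhdsWithin_iff]
  refine ⟨lim_arg z, ?_⟩
  filter_upwards [eventually_ge_atTop 1] with d hd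
  have hd0 : (0:ℝ) < d := by exact_mod_cast hd
  have hs : Real.sqrt d ≠ 0 := by positivity
  exact div_ne_zero hz hs

lemma lim_dlogcos (z : ℝ) :
    Tendsto (fun d : ℕ => (d : ℝ) * Real.log (Real.cos (z / Real.sqrt d))) atTop
      (nhds (-(z ^ 2 / 2))) := by
  rcases eq_or_ne z 0 with rfl | hz
  · simpa using (tendsto_const_nhds : Tendsto (fun _ : ℕ => (0:ℝ)) atTop (nhds 0))
  · have h := (lim_log_cos.comp (lim_arg' hz)).const_mul (z ^ 2)
    have heq : z ^ 2 * -(1/2) = -(z ^ 2 / 2) := by ring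
    rw [heq] at h
    refine h.congr' ?_
    filter_upwards [eventually_ge_atTop 1] with d hd
    have hd0 : (0:ℝ) < d := by exact_mod_cast hd
    have hs : Real.sqrt d ≠ 0 := by positivity
    have ht2 : (z / Real.sqrt d) ^ 2 = z ^ 2 / d := by
      rw [div_pow, Real.sq_sqrt (le_of_lt hd0)]
    simp only [Function.comp_apply, ht2]
    field_simp

lemma lim_logcos0 (z : ℝ) :
    Tendsto (fun d : ℕ => Real.log (Real.cos (z / Real.sqrt d))) atTop (nhds 0) := by
  have h : Tendsto (fun t : ℝ => Real.log (Real.cos t)) (nhds 0) (nhds 0) := by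
    have hc : ContinuousAt (fun t : ℝ => Real.log (Real.cos t)) 0 := by
      apply (Real.continuousAt_log (by simp)).comp
      exact Real.continuous_cos.continuousAt
    simpa using hc.tendsto
  exact h.comp (lim_arg z)

lemma lim_cos_pos (z : ℝ) : ∀ᶠ d : ℕ in atTop, 0 < Real.cos (z / Real.sqrt d) := by
  have h : Tendsto (fun d : ℕ => Real.cos (z / Real.sqrt d)) atTop (nhds 1) := by
    have := (Real.continuous_cos.tendsto 0).comp (lim_arg z)
    simpa [Function.comp_def] using this
  exact h.eventually (eventually_gt_nhds one_pos)

lemma lim_cos_pow (z : ℝ) :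
    Tendsto (fun d : ℕ => Real.cos (z / Real.sqrt d) ^ d) atTop
      (nhds (Real.exp (-(z ^ 2 / 2)))) := by
  have h := (Real.continuous_exp.tendsto _).comp (lim_dlogcos z)
  refine h.congr' ?_
  filter_upwards [lim_cos_pos z] with d hd
  simp only [Function.comp_apply]
  rw [Real.exp_nat_mul, Real.exp_log hd]

lemma lim_cos_pow_sub (z : ℝ) :
    Tendsto (fun d : ℕ => Real.cos (z / Real.sqrt d) ^ (d - 2)) atTop
      (nhds (Real.exp (-(z ^ 2 / 2)))) := by
  have h1 : Tendsto (fun d : ℕ => (d : ℝ) * Real.log (Real.cos (z / Real.sqrt d))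
      - 2 * Real.log (Real.cos (z / Real.sqrt d))) atTop (nhds (-(z ^ 2 / 2) - 2 * 0)) :=
    (lim_dlogcos z).sub ((lim_logcos0 z).const_mul 2)
  rw [mul_zero, sub_zero] at h1
  have h := (Real.continuous_exp.tendsto _).comp h1
  refine h.congr' ?_
  filter_upwards [lim_cos_pos z, eventually_ge_atTop 2] with d hd hd2
  simp only [Function.comp_apply]
  have : ((d : ℝ)) * Real.log (Real.cos (z / Real.sqrt d))
      - 2 * Real.log (Real.cos (z / Real.sqrt d))
      = ((d - 2 : ℕ) : ℝ) * Real.log (Real.cos (z / Real.sqrt d)) := by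
    have : ((d - 2 : ℕ) : ℝ) = (d : ℝ) - 2 := by
      push_cast [Nat.cast_sub hd2]
      ring
    rw [this]; ring
  rw [this, Real.exp_nat_mul, Real.exp_log hd]

lemma lim_sin_sq (z : ℝ) :
    Tendsto (fun d : ℕ => ((d : ℝ) - 1) * Real.sin (z / Real.sqrt d) ^ 2) atTop
      (nhds (z ^ 2)) := by
  rcases eq_or_ne z 0 with rfl | hz
  · have : ∀ d : ℕ, ((d : ℝ) - 1) * Real.sin ((0:ℝ) / Real.sqrt d) ^ 2 = 0 := by
      intro d; simp
    simp only [this]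
    simpa using (tendsto_const_nhds : Tendsto (fun _ : ℕ => (0:ℝ)) atTop (nhds 0))
  · have hratio : Tendsto (fun d : ℕ => 1 - 1 / (d : ℝ)) atTop (nhds 1) := by
      have : Tendsto (fun n : ℕ => 1 / (n : ℝ)) atTop (nhds 0) := tendsto_one_div_atTop_nhds_zero_nat
      simpa using (tendsto_const_nhds (x := (1:ℝ))).sub this
    have hsq := ((lim_sin_div.comp (lim_arg' hz)).pow 2)
    have h := (hsq.mul hratio).const_mul (z ^ 2)
    have heq : z ^ 2 * (1 ^ 2 * 1) = z ^ 2 := by ring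
    rw [heq] at h
    refine h.congr' ?_
    filter_upwards [eventually_ge_atTop 1] with d hd
    have hd0 : (0:ℝ) < d := by exact_mod_cast hd
    have hs : Real.sqrt d ≠ 0 := by positivity
    have ht2 : (z / Real.sqrt d) ^ 2 = z ^ 2 / d := by
      rw [div_pow, Real.sq_sqrt (le_of_lt hd0)]
    have htne : z / Real.sqrt d ≠ 0 := div_ne_zero hz hs
    simp only [Function.comp_apply]
    rw [div_pow, ht2]
    field_simp

/-- Pointwise limit: `cos^d(z/√d) - (d-1) cos^{d-2}(z/√d) sin²(z/√d) → (1-z²) exp(-z²/2)`. -/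
theorem kostlan_B_tendsto (z : ℝ) :
    Tendsto (fun d : ℕ =>
        Real.cos (z / Real.sqrt d) ^ d
          - (d - 1 : ℝ) * Real.cos (z / Real.sqrt d) ^ (d - 2)
            * Real.sin (z / Real.sqrt d) ^ 2)
      atTop (nhds ((1 - z ^ 2) * Real.exp (-z ^ 2 / 2))) := by
  have h := (lim_cos_pow z).sub ((lim_cos_pow_sub z).mul (lim_sin_sq z))
  have heq : Real.exp (-(z ^ 2 / 2)) - Real.exp (-(z ^ 2 / 2)) * z ^ 2
      = (1 - z ^ 2) * Real.exp (-z ^ 2 / 2) := by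
    rw [neg_div]
    ring
  rw [heq] at h
  refine h.congr fun d => ?_
  ring
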